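/- Let 1 ≤ k < n, let M be a rigid indecomposable Cohen–Macaulay B_{k,n}-module, and let j ∈ {1,…,n}. Then inc_j(M) is rigid in CM(B_{k+1,n+1}) and inc^c_j(M) is rigid in CM(B_{k,n+1}), i.e. every short exact sequence 0 → inc_j(M) → E → inc_j(M) → 0 of Cohen–Macaulay B_{k+1,n+1}-modules splits, and likewise for inc^c_j(M) over B_{k,n+1}. -/

import Mathlib

open scoped Classical

noncomputable section

namespace GCC

/-- The base ring `R = ℂ⟦t⟧` of formal power series. -/
abbrev Rser : Type := PowerSeries ℂ

/-- The power series variable `t`. -/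
noncomputable def tser : Rser := PowerSeries.X

/-- The cyclic product `X i * X (i-1) * ⋯ * X (i-(n-1))`, i.e.
`X_{i+n} · X_{i+n-1} · ⋯ · X_{i+1}` with indices read modulo `n`. -/
def cycProd {n s : ℕ} (X : ZMod n → Matrix (Fin s) (Fin s) Rser) (i : ZMod n) :
    Matrix (Fin s) (Fin s) Rser :=
  ((List.range n).map fun j => X (i - (j : ZMod n))).prod

/-- A (maximal) Cohen–Macaulay `B_{k,n}`-module of rank `s`: a family of `s × s`
matrices `X i`, `Y i` over `ℂ⟦t⟧`, indexed by `ℤ/n`, subject to the relations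
`X i * Y i = t·Id`, `Y i * X i = t·Id`, and the cyclic relation
`X_{i+n} ⋯ X_{i+1} = t^(n-k)·Id`. -/
structure CMMod (k n s : ℕ) : Type where
  X : ZMod n → Matrix (Fin s) (Fin s) Rser
  Y : ZMod n → Matrix (Fin s) (Fin s) Rser
  hXY : ∀ i, X i * Y i = tser • (1 : Matrix (Fin s) (Fin s) Rser)
  hYX : ∀ i, Y i * X i = tser • (1 : Matrix (Fin s) (Fin s) Rser)
  hcyc : ∀ i, cycProd X i = (tser ^ (n - k)) • (1 : Matrix (Fin s) (Fin s) Rser)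

/-- A morphism of Cohen–Macaulay `B_{k,n}`-modules: a family of matrices
`F i` with `F i * X i = X' i * F (i-1)` and `F (i-1) * Y i = Y' i * F i`. -/
structure CMHom {k n s s' : ℕ} (M : CMMod k n s) (M' : CMMod k n s') : Type where
  F : ZMod n → Matrix (Fin s') (Fin s) Rser
  hX : ∀ i, F i * M.X i = M'.X i * F (i - 1)
  hY : ∀ i, F (i - 1) * M.Y i = M'.Y i * F i

/-- `M` is indecomposable: its only idempotent endomorphisms are `0` and the identity. -/
def Indecomposable {k n s : ℕ} (M : CMMod k n s) : Prop :=
  ∀ f : CMHom M M, (∀ i, f.F i * f.F i = f.F i) → (∀ i, f.F i = 0) ∨ (∀ i, f.F i = 1)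

/-- A short exact sequence `0 → A → E → B → 0` in `CM(B_{k,n})`: a pair of
morphisms that is exact at each index `i` as a sequence of `R`-modules. -/
structure CMses {k n sA sE sB : ℕ} (A : CMMod k n sA) (E : CMMod k n sE)
    (B : CMMod k n sB) : Type where
  emb : CMHom A E
  quo : CMHom E B
  inj : ∀ i, Function.Injective ((emb.F i).mulVecLin)
  exactness : ∀ i, LinearMap.range ((emb.F i).mulVecLin) = LinearMap.ker ((quo.F i).mulVecLin)
  surj : ∀ i, Function.Surjective ((quo.F i).mulVecLin)

/-- A short exact sequence splits if some morphism `ρ : E → A` satisfies `ρ ∘ ι = id`. -/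
def CMses.Splits {k n sA sE sB : ℕ} {A : CMMod k n sA} {E : CMMod k n sE} {B : CMMod k n sB}
    (S : CMses A E B) : Prop :=
  ∃ ρ : CMHom E A, ∀ i, ρ.F i * S.emb.F i = 1

/-- `M` is rigid: every short exact sequence `0 → M → E → M → 0` splits. -/
def Rigid {k n s : ℕ} (M : CMMod k n s) : Prop :=
  ∀ (sE : ℕ) (E : CMMod k n sE) (S : CMses M E M), S.Splits

/-- `N` is the rank-1 module `L_I`: `X i = 1`, `Y i = t` for `i ∈ I`, and
`X i = t`, `Y i = 1` for `i ∉ I`. -/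
def IsRankOne {k n : ℕ} (I : Finset (ZMod n)) (N : CMMod k n 1) : Prop :=
  (∀ i, N.X i = if i ∈ I then 1 else tser • 1) ∧
  (∀ i, N.Y i = if i ∈ I then tser • 1 else 1)

/-- `M` admits the filtration `L_{I₁} | L_{I₂} | ⋯ | L_{Iₘ}`: there are modules
`M = N₁, N₂, …, Nₘ = L_{Iₘ}` and short exact sequences
`0 → N_{j+1} → N_j → L_{I_j} → 0`. -/
inductive HasFiltration {k n : ℕ} : {s : ℕ} → CMMod k n s → List (Finset (ZMod n)) → Prop
  | base {I : Finset (ZMod n)} {N : CMMod k n 1} : IsRankOne I N → HasFiltration N [I]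
  | step {s s' : ℕ} {N : CMMod k n s} {M : CMMod k n s'} {Q : CMMod k n 1}
      {I : Finset (ZMod n)} {rest : List (Finset (ZMod n))} :
      IsRankOne I Q → HasFiltration N rest → Nonempty (CMses N M Q) →
      HasFiltration M (I :: rest)


/-- The label in `{1,…,n}` of a residue in `ℤ/n`. -/
def labelOfZ (n : ℕ) (z : ZMod n) : ℕ := if z.val = 0 then n else z.val

/-- Insert an extra matrix `A` after position `j` of the cyclic family `X`:
the new family, indexed by `ℤ/(n+1)`, is `(X_1, …, X_j, A, X_{j+1}, …, X_n)`. -/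
def incData {n s : ℕ} (j : ℕ) (X : ZMod n → Matrix (Fin s) (Fin s) Rser)
    (A : Matrix (Fin s) (Fin s) Rser) : ZMod (n + 1) → Matrix (Fin s) (Fin s) Rser :=
  fun i' =>
    if labelOfZ (n + 1) i' ≤ j then X ((labelOfZ (n + 1) i' : ℕ) : ZMod n)
    else if labelOfZ (n + 1) i' = j + 1 then A
    else X (((labelOfZ (n + 1) i' - 1 : ℕ) : ZMod n))


lemma labelOfZ_le (hn : 0 < n) (z : ZMod n) : labelOfZ n z ≤ n := by
  haveI : NeZero n := ⟨hn.ne'⟩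
  unfold labelOfZ; split
  · exact le_rfl
  · exact (ZMod.val_lt z).le

lemma one_le_labelOfZ (hn : 0 < n) (z : ZMod n) : 1 ≤ labelOfZ n z := by
  unfold labelOfZ; split
  · exact hn
  · omega

lemma labelOfZ_cast (hn : 0 < n) {a : ℕ} (h1 : 1 ≤ a) (h2 : a ≤ n) :
    labelOfZ n ((a : ℕ) : ZMod n) = a := by
  haveI : NeZero n := ⟨hn.ne'⟩
  rcases eq_or_lt_of_le h2 with rfl | h
  · unfold labelOfZ
    rw [ZMod.natCast_self]
    simp
  · unfold labelOfZ
    rw [ZMod.val_cast_of_lt h, if_neg (by omega)]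

lemma cast_labelOfZ (hn : 0 < n) (z : ZMod n) : ((labelOfZ n z : ℕ) : ZMod n) = z := by
  haveI : NeZero n := ⟨hn.ne'⟩
  unfold labelOfZ; split
  · rename_i h
    rw [ZMod.natCast_self]
    exact (ZMod.val_eq_zero z).mp h |>.symm
  · exact ZMod.natCast_rightInverse z

lemma labelOfZ_sub_one (hn : 2 ≤ n) (z : ZMod n) :
    labelOfZ n (z - 1) = if labelOfZ n z = 1 then n else labelOfZ n z - 1 := by
  haveI : NeZero n := ⟨by omega⟩
  have h1 := one_le_labelOfZ (by omega : 0 < n) z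
  have h2 := labelOfZ_le (by omega : 0 < n) z
  have hz := cast_labelOfZ (by omega : 0 < n) z
  set a := labelOfZ n z with ha
  rcases eq_or_lt_of_le h1 with h | h
  · rw [if_pos h.symm]
    have : z - 1 = 0 := by
      rw [← hz, ← h]; push_cast; ring
    rw [this]
    unfold labelOfZ
    simp
  · rw [if_neg (by omega)]
    have : z - 1 = ((a - 1 : ℕ) : ZMod n) := by
      rw [← hz, Nat.cast_sub h1, Nat.cast_one]
    rw [this, labelOfZ_cast (by omega) (by omega) (by omega)]


def psiF (n j : ℕ) (z : ZMod n) : ZMod (n+1) :=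
  if labelOfZ n z ≤ j then ((labelOfZ n z : ℕ) : ZMod (n+1))
  else ((labelOfZ n z + 1 : ℕ) : ZMod (n+1))

def chiF (n j : ℕ) (i : ZMod (n+1)) : ZMod n :=
  if labelOfZ (n+1) i ≤ j then ((labelOfZ (n+1) i : ℕ) : ZMod n)
  else ((labelOfZ (n+1) i - 1 : ℕ) : ZMod n)

section PsiLemmas
variable {n j : ℕ} (hn : 2 ≤ n) (hj : 1 ≤ j) (hj' : j ≤ n)
include hn hj hj'

lemma psi_lab (z : ZMod n) : labelOfZ (n+1) (psiF n j z) =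
    if labelOfZ n z ≤ j then labelOfZ n z else labelOfZ n z + 1 := by
  have h1 := one_le_labelOfZ (by omega : 0 < n) z
  have h2 := labelOfZ_le (by omega : 0 < n) z
  unfold psiF; split
  · rw [labelOfZ_cast (by omega) h1 (by omega)]
  · rw [labelOfZ_cast (by omega) (by omega) (by omega)]

lemma incData_psi {s : ℕ} (X : ZMod n → Matrix (Fin s) (Fin s) Rser)
    (A : Matrix (Fin s) (Fin s) Rser) (z : ZMod n) : incData j X A (psiF n j z) = X z := by
  have h1 := one_le_labelOfZ (by omega : 0 < n) z
  have h2 := labelOfZ_le (by omega : 0 < n) z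
  have hl := psi_lab hn hj hj' (z := z)
  have hz := cast_labelOfZ (by omega : 0 < n) z
  unfold incData
  by_cases hc : labelOfZ n z ≤ j
  · rw [hl, if_pos hc, if_pos hc, hz]
  · rw [hl, if_neg hc, if_neg (by omega), if_neg (by omega)]
    have : labelOfZ n z + 1 - 1 = labelOfZ n z := by omega
    rw [this, hz]

lemma incData_pt {s : ℕ} (X : ZMod n → Matrix (Fin s) (Fin s) Rser)
    (A : Matrix (Fin s) (Fin s) Rser) : incData j X A ((j+1 : ℕ) : ZMod (n+1)) = A := by
  unfold incData
  rw [labelOfZ_cast (by omega) (by omega) (by omega), if_neg (by omega), if_pos rfl]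

lemma psi_ne_p (z : ZMod n) : psiF n j z ≠ ((j+1 : ℕ) : ZMod (n+1)) := by
  intro h
  have h1 := one_le_labelOfZ (by omega : 0 < n) z
  have h2 := labelOfZ_le (by omega : 0 < n) z
  have := psi_lab hn hj hj' (z := z)
  rw [h, labelOfZ_cast (by omega) (by omega) (by omega)] at this
  split at this <;> omega

lemma chi_psi (z : ZMod n) : chiF n j (psiF n j z) = z := by
  have h1 := one_le_labelOfZ (by omega : 0 < n) z
  have h2 := labelOfZ_le (by omega : 0 < n) z
  have hl := psi_lab hn hj hj' (z := z)
  have hz := cast_labelOfZ (by omega : 0 < n) z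
  unfold chiF
  by_cases hc : labelOfZ n z ≤ j
  · rw [hl, if_pos hc, if_pos hc, hz]
  · rw [hl, if_neg hc, if_neg (by omega)]
    have : labelOfZ n z + 1 - 1 = labelOfZ n z := by omega
    rw [this, hz]

lemma psi_chi {i : ZMod (n+1)} (h : i ≠ ((j+1 : ℕ) : ZMod (n+1))) :
    psiF n j (chiF n j i) = i := by
  have h1 := one_le_labelOfZ (by omega : 0 < n+1) i
  have h2 := labelOfZ_le (by omega : 0 < n+1) i
  have hi := cast_labelOfZ (by omega : 0 < n+1) i
  have hm : labelOfZ (n+1) i ≠ j + 1 := by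
    intro he
    exact h (by rw [← hi, he])
  unfold chiF psiF
  by_cases hc : labelOfZ (n+1) i ≤ j
  · rw [if_pos hc, labelOfZ_cast (by omega) h1 (by omega), if_pos hc, hi]
  · rw [if_neg hc, labelOfZ_cast (by omega) (by omega) (by omega), if_neg (by omega)]
    have : labelOfZ (n+1) i - 1 + 1 = labelOfZ (n+1) i := by omega
    rw [this, hi]

lemma psi_z0 : psiF n j ((j+1 : ℕ) : ZMod n) = ((j+1 : ℕ) : ZMod (n+1)) + 1 := by
  rcases eq_or_lt_of_le hj' with rfl | h
  · have hz : ((j+1 : ℕ) : ZMod j) = ((1 : ℕ) : ZMod j) := by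
      push_cast
      rw [ZMod.natCast_self]
      ring
    unfold psiF
    rw [hz, labelOfZ_cast (by omega) (by omega) (by omega), if_pos hj]
    have h0 : ((j+1 : ℕ) : ZMod (j+1)) = 0 := ZMod.natCast_self _
    push_cast at h0 ⊢
    linear_combination -h0
  · unfold psiF
    rw [labelOfZ_cast (by omega) (by omega) (by omega), if_neg (by omega)]
    push_cast
    ring

lemma psi_sub_one {z : ZMod n} (h : z ≠ ((j+1 : ℕ) : ZMod n)) :
    psiF n j (z - 1) = psiF n j z - 1 := by
  have h1 := one_le_labelOfZ (by omega : 0 < n) z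
  have h2 := labelOfZ_le (by omega : 0 < n) z
  have hz := cast_labelOfZ (by omega : 0 < n) z
  have hsub := labelOfZ_sub_one hn z
  unfold psiF
  rw [hsub]
  by_cases he : labelOfZ n z = 1
  · -- z has label 1; since z ≠ z₀ we must have j < n
    have hjn : j < n := by
      rcases eq_or_lt_of_le hj' with rfl | hh
      · exfalso
        apply h
        rw [← hz, he]
        push_cast
        rw [ZMod.natCast_self]
        ring
      · exact hh
    rw [if_pos he, if_neg (by omega), if_pos (by omega : labelOfZ n z ≤ j)]
    rw [he]
    have h0 : ((n+1 : ℕ) : ZMod (n+1)) = 0 := ZMod.natCast_self _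
    push_cast at h0 ⊢
    linear_combination h0
  · rw [if_neg he]
    have hne : labelOfZ n z ≠ j + 1 := by
      intro hc
      apply h
      rw [← hz, hc]
    by_cases hc : labelOfZ n z ≤ j
    · rw [if_pos (by omega), if_pos hc]
      have : labelOfZ n z = (labelOfZ n z - 1) + 1 := by omega
      rw [this]
      push_cast
      ring
    · rw [if_neg (by omega), if_neg hc]
      have : labelOfZ n z + 1 = (labelOfZ n z - 1 + 1) + 1 := by omega
      rw [this]
      push_cast
      ring

lemma psi_z0_sub_one :
    psiF n j (((j+1 : ℕ) : ZMod n) - 1) = ((j+1 : ℕ) : ZMod (n+1)) - 1 := by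
  rcases eq_or_lt_of_le hj' with rfl | h
  · have hz : ((j+1 : ℕ) : ZMod j) - 1 = ((j : ℕ) : ZMod j) := by
      push_cast
      ring
    rw [hz]
    unfold psiF
    rw [labelOfZ_cast (by omega) (by omega) (by omega)]
    have hzz : labelOfZ j ((j : ℕ) : ZMod j) = j := labelOfZ_cast (by omega) (by omega) (by omega)
    rw [if_pos le_rfl]
    push_cast
    ring
  · have hz : ((j+1 : ℕ) : ZMod n) - 1 = ((j : ℕ) : ZMod n) := by
      push_cast
      ring
    rw [hz]
    unfold psiF
    rw [labelOfZ_cast (by omega) (by omega) (by omega), if_pos le_rfl]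
    push_cast
    ring

lemma psi_iter : ∀ l : ℕ, 1 ≤ l → l ≤ n - 1 →
    psiF n j (((j+1 : ℕ) : ZMod n) - (l : ℕ)) = ((j+1 : ℕ) : ZMod (n+1)) - (l : ℕ) := by
  intro l
  induction l with
  | zero => omega
  | succ m ih =>
    intro _ hle
    rcases Nat.eq_or_lt_of_le (by omega : 1 ≤ m + 1) with h | h
    · have : (((1:ℕ) : ZMod n)) = (1 : ZMod n) := by push_cast; ring
      rw [← h]
      rw [this]
      have := psi_z0_sub_one hn hj hj'
      simpa using this
    · have hm1 : 1 ≤ m := by omega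
      have hmn : m ≤ n - 1 := by omega
      have hih := ih hm1 hmn
      have hne : ((j+1 : ℕ) : ZMod n) - (m : ℕ) ≠ ((j+1 : ℕ) : ZMod n) := by
        intro hc'
        have hc : ((m : ℕ) : ZMod n) = 0 := sub_eq_self.mp hc'
        have : ((m : ℕ) : ZMod n).val = m := ZMod.val_cast_of_lt (by omega)
        rw [hc] at this
        simp at this
        omega
      have step := psi_sub_one hn hj hj' hne
      have e1 : ((j+1 : ℕ) : ZMod n) - ((m+1 : ℕ) : ZMod n) =
          (((j+1 : ℕ) : ZMod n) - (m : ℕ)) - 1 := by push_cast; ring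
      have e2 : ((j+1 : ℕ) : ZMod (n+1)) - ((m+1 : ℕ) : ZMod (n+1)) =
          (((j+1 : ℕ) : ZMod (n+1)) - (m : ℕ)) - 1 := by push_cast; ring
      rw [e1, step, hih, ← e2]

end PsiLemmas


lemma cycProd_eq {n s : ℕ} (X : ZMod n → Matrix (Fin s) (Fin s) Rser) (i : ZMod n) :
    cycProd X i = ((List.range n).map (fun (j : ℕ) => X (i - (j : ZMod n)))).prod := by
  unfold cycProd
  congr 1
  induction (List.range n) with
  | nil => rfl
  | cons a l ih =>
    simp only [List.bind_eq_flatMap, List.flatMap_cons, List.map_append, List.map_cons,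
      List.map_nil, List.cons_append, List.nil_append, List.pure_def] at ih ⊢
    rw [ih]

section MatHelp
variable {s : ℕ}

lemma tser_ne_zero : tser ≠ 0 := PowerSeries.X_ne_zero

lemma smul_pow_cancel {u v : ℕ} {e : ℕ} {a b : Matrix (Fin u) (Fin v) Rser}
    (h : tser ^ e • a = tser ^ e • b) : a = b := by
  refine Matrix.ext fun i j => ?_
  have := congrFun (congrFun (congrArg (fun M : Matrix (Fin u) (Fin v) Rser => M) h) i) j
  simp only [Matrix.smul_apply, smul_eq_mul] at this
  exact mul_left_cancel₀ (pow_ne_zero _ tser_ne_zero) this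

lemma smul_cancel {a b : Matrix (Fin s) (Fin s) Rser}
    (h : tser • a = tser • b) : a = b := by
  have : tser ^ 1 • a = tser ^ 1 • b := by simpa using h
  exact smul_pow_cancel this

-- peel the first element off a cycProd
lemma cycProd_head {n : ℕ} (hn : 1 ≤ n) (X : ZMod n → Matrix (Fin s) (Fin s) Rser)
    (i : ZMod n) :
    cycProd X i = X i *
      ((List.range (n-1)).map fun (l : ℕ) => X (i - ((l+1 : ℕ) : ZMod n))).prod := by
  rw [cycProd_eq]
  obtain ⟨m, rfl⟩ : ∃ m, n = m + 1 := ⟨n - 1, by omega⟩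
  rw [List.range_succ_eq_map, List.map_cons, List.prod_cons, List.map_map, Nat.add_sub_cancel]
  rw [Nat.cast_zero, sub_zero]
  congr 1

-- peel the last element off a cycProd
lemma cycProd_last {n : ℕ} (hn : 1 ≤ n) (X : ZMod n → Matrix (Fin s) (Fin s) Rser)
    (i : ZMod n) :
    cycProd X i =
      ((List.range (n-1)).map fun (l : ℕ) => X (i - ((l : ℕ) : ZMod n))).prod * X (i + 1) := by
  rw [cycProd_eq]
  obtain ⟨m, rfl⟩ : ∃ m, n = m + 1 := ⟨n - 1, by omega⟩
  rw [List.range_succ, List.map_append, List.prod_append, List.map_singleton,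
    List.prod_singleton, Nat.add_sub_cancel]
  have he : i - ((m : ℕ) : ZMod (m+1)) = i + 1 := by
    have h0 : ((m+1 : ℕ) : ZMod (m+1)) = 0 := ZMod.natCast_self _
    push_cast at h0
    linear_combination -h0
  rw [he]

lemma cyc_step {n : ℕ} (hn : 1 ≤ n) {X Y : ZMod n → Matrix (Fin s) (Fin s) Rser}
    (hXY : ∀ i, X i * Y i = tser • (1 : Matrix (Fin s) (Fin s) Rser))
    {c : ℕ} (hc : 1 ≤ c) (i : ZMod n)
    (h : cycProd X i = (tser ^ c) • 1) :
    cycProd X (i + 1) = (tser ^ c) • 1 := by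
  set P := ((List.range (n-1)).map fun (l : ℕ) => X (i - ((l : ℕ) : ZMod n))).prod with hP
  have hlast := cycProd_last hn X i
  rw [h] at hlast
  have hPX : P * X (i + 1) = (tser ^ c) • 1 := hlast.symm
  have hPY : tser • P = tser • ((tser ^ (c-1)) • Y (i + 1)) := by
    have h2 := congrArg (fun M => M * Y (i + 1)) hPX
    simp only [mul_assoc, hXY (i+1), Matrix.smul_mul, Matrix.one_mul] at h2
    calc tser • P = P * (tser • 1) := by
            rw [Matrix.mul_smul, mul_one]
          _ = (tser ^ c) • Y (i+1) := h2
          _ = tser • ((tser ^ (c-1)) • Y (i + 1)) := by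
            rw [smul_smul, ← pow_succ']
            congr 2
            omega
  have hPeq : P = (tser ^ (c-1)) • Y (i + 1) := smul_cancel hPY
  have hhead := cycProd_head hn X (i + 1)
  have hPagain : ((List.range (n-1)).map fun (l : ℕ) => X (i + 1 - ((l+1 : ℕ) : ZMod n))).prod
      = P := by
    rw [hP]
    congr 1
    apply List.map_congr_left
    intro a _
    congr 1
    push_cast
    ring
  rw [hPagain, hPeq] at hhead
  rw [hhead, Matrix.mul_smul, hXY (i+1), smul_smul, ← pow_succ]
  congr 2
  omega

lemma cyc_all {n : ℕ} (hn : 1 ≤ n) {X Y : ZMod n → Matrix (Fin s) (Fin s) Rser}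
    (hXY : ∀ i, X i * Y i = tser • (1 : Matrix (Fin s) (Fin s) Rser))
    {c : ℕ} (hc : 1 ≤ c) (z₀ : ZMod n)
    (h : cycProd X z₀ = (tser ^ c) • 1) :
    ∀ z, cycProd X z = (tser ^ c) • 1 := by
  haveI : NeZero n := ⟨by omega⟩
  have key : ∀ m : ℕ, cycProd X (z₀ + (m : ℕ)) = (tser ^ c) • 1 := by
    intro m
    induction m with
    | zero => simpa using h
    | succ l ih =>
      have h2 := cyc_step hn hXY hc (z₀ + (l : ℕ)) ih
      have he : z₀ + ((l+1 : ℕ) : ZMod n) = z₀ + (l : ℕ) + 1 := by push_cast; ring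
      rw [he]
      exact h2
  intro z
  have h3 := key (z - z₀).val
  rwa [ZMod.natCast_rightInverse (z - z₀), add_sub_cancel] at h3

lemma surj_mid {a b : ℕ} {Z : Matrix (Fin a) (Fin a) Rser}
    {e₀ e₁ : Matrix (Fin a) (Fin b) Rser} {q₀ q₁ : Matrix (Fin b) (Fin a) Rser}
    (h1 : e₁ = Z * e₀) (h2 : q₁ * Z = q₀)
    (hsurj : Function.Surjective q₀.mulVecLin)
    (hex : LinearMap.range e₁.mulVecLin = LinearMap.ker q₁.mulVecLin) :
    Function.Surjective Z.mulVecLin := by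
  intro w
  obtain ⟨v, hv⟩ := hsurj (q₁.mulVecLin w)
  have hker : q₁.mulVecLin (w - Z.mulVecLin v) = 0 := by
    rw [map_sub]
    have h3 : q₁.mulVecLin (Z.mulVecLin v) = q₀.mulVecLin v := by
      rw [← h2, Matrix.mulVecLin_mul]
      rfl
    rw [h3, hv, sub_self]
  have h4 : w - Z.mulVecLin v ∈ LinearMap.range e₁.mulVecLin := by
    rw [hex]; exact hker
  obtain ⟨u, hu⟩ := h4
  refine ⟨v + e₀.mulVecLin u, ?_⟩
  rw [map_add]
  have h5 : Z.mulVecLin (e₀.mulVecLin u) = e₁.mulVecLin u := by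
    rw [h1, Matrix.mulVecLin_mul]
    rfl
  rw [h5, hu]
  abel

lemma isUnit_of_surj {a : ℕ} {Z : Matrix (Fin a) (Fin a) Rser}
    (h : Function.Surjective Z.mulVecLin) :
    ∃ D : Matrix (Fin a) (Fin a) Rser, Z * D = 1 ∧ D * Z = 1 := by
  have h1 : Function.Surjective Z.mulVec := h
  have hu : IsUnit Z := Matrix.mulVec_surjective_iff_isUnit.mp h1
  obtain ⟨u, hu⟩ := hu
  exact ⟨(↑u⁻¹ : Matrix (Fin a) (Fin a) Rser), by rw [← hu]; exact u.mul_inv,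
    by rw [← hu]; exact u.inv_mul⟩

end MatHelp

set_option maxHeartbeats 1000000 in
lemma master {k n s : ℕ} (hn : 2 ≤ n) (hc : 1 ≤ n - k) {j : ℕ} (hj : 1 ≤ j) (hj' : j ≤ n)
    (M : CMMod k n s) (hrig : Rigid M)
    {k' ε : ℕ} (hε1 : ε ≤ 1) (hexp : n + 1 - k' = (n - k) + ε)
    (M' : CMMod k' (n+1) s)
    (hX' : M'.X = incData j M.X ((tser ^ ε) • 1))
    (hY' : M'.Y = incData j M.Y ((tser ^ (1-ε)) • 1)) :
    Rigid M' := by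
  intro sE E S
  haveI : NeZero n := ⟨by omega⟩
  haveI : NeZero (n+1) := ⟨by omega⟩
  haveI : Fact (1 < n+1) := ⟨by omega⟩
  set p : ZMod (n+1) := ((j+1 : ℕ) : ZMod (n+1)) with hp
  set z₀ : ZMod n := ((j+1 : ℕ) : ZMod n) with hz₀
  have hpz0 : psiF n j z₀ = p + 1 := by rw [hp, hz₀]; exact psi_z0 hn hj hj'
  have hpz0' : psiF n j (z₀ - 1) = p - 1 := by rw [hp, hz₀]; exact psi_z0_sub_one hn hj hj'
  have hpsi_ne : ∀ z : ZMod n, psiF n j z ≠ p := by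
    intro z; rw [hp]; exact psi_ne_p hn hj hj' z
  have hd : ∀ z : ZMod n, z ≠ z₀ → psiF n j (z-1) = psiF n j z - 1 := by
    intro z h; exact psi_sub_one hn hj hj' (by rw [← hz₀]; exact h)
  have hchi : ∀ z : ZMod n, chiF n j (psiF n j z) = z := fun z => chi_psi hn hj hj' z
  have hchi' : ∀ i : ZMod (n+1), i ≠ p → psiF n j (chiF n j i) = i := by
    intro i h; exact psi_chi hn hj hj' (by rw [← hp]; exact h)
  have hMX : ∀ z, M'.X (psiF n j z) = M.X z := by
    intro z; rw [hX']; exact incData_psi hn hj hj' _ _ z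
  have hMY : ∀ z, M'.Y (psiF n j z) = M.Y z := by
    intro z; rw [hY']; exact incData_psi hn hj hj' _ _ z
  have hMXp : M'.X p = (tser ^ ε) • 1 := by rw [hp, hX']; exact incData_pt hn hj hj' _ _
  have hMYp : M'.Y p = (tser ^ (1-ε)) • 1 := by rw [hp, hY']; exact incData_pt hn hj hj' _ _
  have hone : (1 : ZMod (n+1)) ≠ 0 := one_ne_zero
  have hp1p : p + 1 ≠ p := by
    intro h
    apply hone
    have := congrArg (fun w => w - p) h
    simpa using this
  have hpm1 : p - 1 ≠ p := by
    intro h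
    apply hone
    have := congrArg (fun w => p - w) h
    simpa using this
  -- the invertible corner matrix
  obtain ⟨C, D, hCD, hDC, hXp, hYp⟩ :
      ∃ C D : Matrix (Fin sE) (Fin sE) Rser, C * D = 1 ∧ D * C = 1 ∧
        E.X p = (tser ^ ε) • C ∧ E.Y p = (tser ^ (1-ε)) • D := by
    interval_cases ε
    · have h1 : S.emb.F p = E.X p * S.emb.F (p - 1) := by
        have h := S.emb.hX p
        rw [hMXp] at h
        simpa using h
      have h2 : S.quo.F p * E.X p = S.quo.F (p-1) := by
        have h := S.quo.hX p
        rw [hMXp] at h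
        simpa using h
      have hsurj := surj_mid h1 h2 (S.surj (p-1)) (S.exactness p)
      obtain ⟨D, hCD, hDC⟩ := isUnit_of_surj hsurj
      refine ⟨E.X p, D, hCD, hDC, by simp, ?_⟩
      have h3 := E.hXY p
      have h4 : D * (E.X p * E.Y p) = D * (tser • 1) := by rw [h3]
      rw [← mul_assoc, hDC, one_mul] at h4
      rw [h4, Matrix.mul_smul, mul_one]
      simp
    · have h1 : S.emb.F (p-1) = E.Y p * S.emb.F p := by
        have h := S.emb.hY p
        rw [hMYp] at h
        simpa using h
      have h2 : S.quo.F (p-1) * E.Y p = S.quo.F p := by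
        have h := S.quo.hY p
        rw [hMYp] at h
        simpa using h
      have hsurj := surj_mid h1 h2 (S.surj p) (S.exactness (p-1))
      obtain ⟨C, hYC, hCY⟩ := isUnit_of_surj hsurj
      refine ⟨C, E.Y p, hCY, hYC, ?_, by simp⟩
      have h3 := E.hXY p
      have h4 : (E.X p * E.Y p) * C = (tser • 1) * C := by rw [h3]
      rw [mul_assoc, hYC, mul_one] at h4
      rw [h4, Matrix.smul_mul, one_mul]
      simp
  -- corner relations for the morphisms of S
  have fact_e : S.emb.F p = C * S.emb.F (p-1) := by
    have h := S.emb.hX p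
    rw [hMXp, hXp, Matrix.mul_smul, Matrix.mul_one, Matrix.smul_mul] at h
    exact smul_pow_cancel h
  have fact_e' : S.emb.F (p-1) = D * S.emb.F p := by
    have h := S.emb.hY p
    rw [hMYp, hYp, Matrix.mul_smul, Matrix.mul_one, Matrix.smul_mul] at h
    exact smul_pow_cancel h
  have fact_q : S.quo.F p * C = S.quo.F (p-1) := by
    have h := S.quo.hX p
    rw [hMXp, hXp, Matrix.mul_smul, Matrix.smul_mul, Matrix.one_mul] at h
    exact smul_pow_cancel h
  have fact_q' : S.quo.F (p-1) * D = S.quo.F p := by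
    have h := S.quo.hY p
    rw [hMYp, hYp, Matrix.mul_smul, Matrix.smul_mul, Matrix.one_mul] at h
    exact smul_pow_cancel h
  -- the reduced middle module
  set rX : ZMod n → Matrix (Fin sE) (Fin sE) Rser :=
    fun z => if z = z₀ then E.X (p+1) * C else E.X (psiF n j z) with hrX
  set rY : ZMod n → Matrix (Fin sE) (Fin sE) Rser :=
    fun z => if z = z₀ then D * E.Y (p+1) else E.Y (psiF n j z) with hrY
  have hrXY : ∀ z, rX z * rY z = tser • (1 : Matrix (Fin sE) (Fin sE) Rser) := by
    intro z
    by_cases h : z = z₀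
    · simp only [hrX, hrY, if_pos h]
      rw [mul_assoc, ← mul_assoc C D, hCD, one_mul]
      exact E.hXY (p+1)
    · simp only [hrX, hrY, if_neg h]
      exact E.hXY (psiF n j z)
  have hrYX : ∀ z, rY z * rX z = tser • (1 : Matrix (Fin sE) (Fin sE) Rser) := by
    intro z
    by_cases h : z = z₀
    · simp only [hrX, hrY, if_pos h]
      rw [mul_assoc, ← mul_assoc (E.Y (p+1)), E.hYX (p+1), Matrix.smul_mul, one_mul,
        Matrix.mul_smul, hDC]
    · simp only [hrX, hrY, if_neg h]
      exact E.hYX (psiF n j z)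
  have hcyc0 : cycProd rX z₀ = (tser ^ (n-k)) • 1 := by
    have hnew : cycProd rX z₀ = (E.X (p+1) * C) *
        ((List.range (n-1)).map fun (l : ℕ) => E.X (p - ((l+1 : ℕ) : ZMod (n+1)))).prod := by
      rw [cycProd_head (by omega : 1 ≤ n) rX z₀]
      congr 1
      · simp only [hrX, if_pos rfl]
      · congr 1
        apply List.map_congr_left
        intro a ha
        have hal : a < n - 1 := List.mem_range.mp ha
        have hne : z₀ - ((a+1 : ℕ) : ZMod n) ≠ z₀ := by
          intro hcon
          have h5 : ((a+1 : ℕ) : ZMod n) = 0 := sub_eq_self.mp hcon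
          have h6 : ((a+1 : ℕ) : ZMod n).val = a+1 := ZMod.val_cast_of_lt (by omega)
          rw [h5] at h6
          simp at h6
        simp only [hrX, if_neg hne]
        rw [hp, hz₀]
        exact congrArg E.X (psi_iter hn hj hj' (a+1) (by omega) (by omega))
    have hold : cycProd E.X (p+1) = E.X (p+1) * (E.X p *
        ((List.range (n-1)).map fun (l : ℕ) => E.X (p - ((l+1 : ℕ) : ZMod (n+1)))).prod) := by
      rw [cycProd_head (by omega : 1 ≤ n+1) E.X (p+1)]
      congr 1
      have h1 : n + 1 - 1 = (n - 1) + 1 := by omega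
      rw [h1, List.range_succ_eq_map, List.map_cons, List.prod_cons, List.map_map]
      congr 1
      · congr 1
        push_cast
        ring
      · congr 1
        apply List.map_congr_left
        intro a _
        simp only [Function.comp]
        congr 1
        push_cast
        ring
    have hbig := E.hcyc (p+1)
    rw [hold] at hbig
    rw [hXp] at hbig
    rw [hexp] at hbig
    rw [Matrix.smul_mul] at hbig
    rw [Matrix.mul_smul] at hbig
    have hr : (tser ^ ((n-k)+ε)) • (1 : Matrix (Fin sE) (Fin sE) Rser)
        = tser ^ ε • ((tser ^ (n-k)) • 1) := by
      rw [smul_smul, ← pow_add, Nat.add_comm]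
    rw [hr] at hbig
    have h7 := smul_pow_cancel hbig
    rw [hnew, mul_assoc]
    exact h7
  have hcycAll : ∀ z, cycProd rX z = (tser ^ (n-k)) • 1 :=
    cyc_all (by omega) hrXY hc z₀ hcyc0
  set redE : CMMod k n sE := ⟨rX, rY, hrXY, hrYX, hcycAll⟩ with hredE
  -- the reduced short exact sequence
  have embX' : ∀ z, S.emb.F (psiF n j z) * M.X z = rX z * S.emb.F (psiF n j (z-1)) := by
    intro z
    by_cases h : z = z₀
    · subst h
      rw [← hMX z₀, hpz0, hpz0']
      simp only [hrX, if_pos rfl]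
      rw [S.emb.hX (p+1), add_sub_cancel_right, fact_e, Matrix.mul_assoc]
    · rw [hd z h, ← hMX z]
      simp only [hrX, if_neg h]
      exact S.emb.hX (psiF n j z)
  have embY' : ∀ z, S.emb.F (psiF n j (z-1)) * M.Y z = rY z * S.emb.F (psiF n j z) := by
    intro z
    by_cases h : z = z₀
    · subst h
      rw [← hMY z₀, hpz0, hpz0']
      simp only [hrY, if_pos rfl]
      rw [fact_e', Matrix.mul_assoc]
      have h8 := S.emb.hY (p+1)
      rw [add_sub_cancel_right] at h8
      rw [h8, Matrix.mul_assoc]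
    · rw [hd z h, ← hMY z]
      simp only [hrY, if_neg h]
      exact S.emb.hY (psiF n j z)
  have quoX' : ∀ z, S.quo.F (psiF n j z) * rX z = M.X z * S.quo.F (psiF n j (z-1)) := by
    intro z
    by_cases h : z = z₀
    · subst h
      rw [← hMX z₀, hpz0, hpz0']
      simp only [hrX, if_pos rfl]
      rw [← Matrix.mul_assoc, S.quo.hX (p+1), add_sub_cancel_right, Matrix.mul_assoc, fact_q]
    · rw [hd z h, ← hMX z]
      simp only [hrX, if_neg h]
      exact S.quo.hX (psiF n j z)
  have quoY' : ∀ z, S.quo.F (psiF n j (z-1)) * rY z = M.Y z * S.quo.F (psiF n j z) := by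
    intro z
    by_cases h : z = z₀
    · subst h
      rw [← hMY z₀, hpz0, hpz0']
      simp only [hrY, if_pos rfl]
      rw [← Matrix.mul_assoc, fact_q']
      have h8 := S.quo.hY (p+1)
      rw [add_sub_cancel_right] at h8
      exact h8
    · rw [hd z h, ← hMY z]
      simp only [hrY, if_neg h]
      exact S.quo.hY (psiF n j z)
  set S' : CMses M redE M :=
    ⟨⟨fun z => S.emb.F (psiF n j z), embX', embY'⟩,
     ⟨fun z => S.quo.F (psiF n j z), quoX', quoY'⟩,
     fun z => S.inj (psiF n j z), fun z => S.exactness (psiF n j z),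
     fun z => S.surj (psiF n j z)⟩ with hS'
  obtain ⟨ρ, hρ⟩ := hrig sE redE S'
  -- lift the retraction back
  have hchip1 : chiF n j (p+1) = z₀ := by rw [← hpz0, hchi]
  have hchipm : chiF n j (p-1) = z₀ - 1 := by rw [← hpz0', hchi]
  set F' : ZMod (n+1) → Matrix (Fin s) (Fin sE) Rser :=
    fun i => if i = p then ρ.F (z₀ - 1) * D else ρ.F (chiF n j i) with hF'
  have hXcond : ∀ i, F' i * E.X i = M'.X i * F' (i - 1) := by
    intro i
    by_cases hip : i = p
    · subst hip
      simp only [hF', if_pos rfl, if_neg hpm1, hchipm]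
      rw [hXp, hMXp, Matrix.mul_smul, Matrix.smul_mul, Matrix.one_mul, Matrix.mul_assoc, hDC, Matrix.mul_one]
    · by_cases hip1 : i = p + 1
      · subst hip1
        rw [show p + 1 - 1 = p from by ring]
        simp only [hF', if_neg hip, if_pos rfl, hchip1]
        have h9 := ρ.hX z₀
        have hrz : redE.X z₀ = E.X (p+1) * C := by simp only [hredE, hrX, if_pos rfl, if_true]
        rw [hrz, ← hMX z₀, hpz0] at h9
        have h10 := congrArg (fun W => W * D) h9
        simp only [Matrix.mul_assoc] at h10 ⊢
        rw [hCD, mul_one] at h10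
        exact h10
      · have hz : chiF n j i ≠ z₀ := by
          intro hcon
          apply hip1
          rw [← hchi' i hip, hcon, hpz0]
        simp only [hF', if_neg hip, if_neg (show i - 1 ≠ p by
          intro hcon
          apply hip1
          rw [← hcon]; ring)]
        have h9 := ρ.hX (chiF n j i)
        have hrz : redE.X (chiF n j i) = E.X i := by
          simp only [hredE, hrX, if_neg hz, hchi' i hip]
        rw [hrz, ← hMX (chiF n j i), hchi' i hip] at h9
        have hc1 : chiF n j (i - 1) = chiF n j i - 1 := by
          rw [← hchi (chiF n j i - 1), hd _ hz, hchi' i hip]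
        rw [hc1]
        exact h9
  have hYcond : ∀ i, F' (i - 1) * E.Y i = M'.Y i * F' i := by
    intro i
    by_cases hip : i = p
    · subst hip
      simp only [hF', if_pos rfl, if_neg hpm1, hchipm]
      rw [hYp, hMYp, Matrix.mul_smul, Matrix.smul_mul, Matrix.one_mul]
    · by_cases hip1 : i = p + 1
      · subst hip1
        rw [show p + 1 - 1 = p from by ring]
        simp only [hF', if_neg hip, if_pos rfl, hchip1]
        have h9 := ρ.hY z₀
        have hrz : redE.Y z₀ = D * E.Y (p+1) := by simp only [hredE, hrY, if_pos rfl, if_true]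
        rw [hrz, ← hMY z₀, hpz0] at h9
        simp only [Matrix.mul_assoc] at h9 ⊢
        exact h9
      · have hz : chiF n j i ≠ z₀ := by
          intro hcon
          apply hip1
          rw [← hchi' i hip, hcon, hpz0]
        simp only [hF', if_neg hip, if_neg (show i - 1 ≠ p by
          intro hcon
          apply hip1
          rw [← hcon]; ring)]
        have h9 := ρ.hY (chiF n j i)
        have hrz : redE.Y (chiF n j i) = E.Y i := by
          simp only [hredE, hrY, if_neg hz, hchi' i hip]
        rw [hrz, ← hMY (chiF n j i), hchi' i hip] at h9
        have hc1 : chiF n j (i - 1) = chiF n j i - 1 := by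
          rw [← hchi (chiF n j i - 1), hd _ hz, hchi' i hip]
        rw [hc1]
        exact h9
  refine ⟨⟨F', hXcond, hYcond⟩, ?_⟩
  intro i
  by_cases hip : i = p
  · subst hip
    show F' p * S.emb.F p = 1
    simp only [hF', if_pos rfl]
    have h11 := hρ (z₀ - 1)
    simp only [hS'] at h11
    rw [hpz0'] at h11
    rw [Matrix.mul_assoc, ← fact_e']
    exact h11
  · show F' i * S.emb.F i = 1
    simp only [hF', if_neg hip]
    have h11 := hρ (chiF n j i)
    simp only [hS'] at h11
    rw [hchi' i hip] at h11
    exact h11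

/-- `M'` is the 1-increase `inc_j(M)`: the X-sequence is
`(X_1,…,X_j, Id, X_{j+1},…,X_n)` and the Y-sequence is
`(Y_1,…,Y_j, t·Id, Y_{j+1},…,Y_n)`. -/
def IsInc {k n s : ℕ} (j : ℕ) (M : CMMod k n s) (M' : CMMod (k + 1) (n + 1) s) : Prop :=
  M'.X = incData j M.X 1 ∧ M'.Y = incData j M.Y (tser • 1)

/-- `M'` is the 1-co-increase `incᶜ_j(M)`: insert `X = t·Id`, `Y = Id` after position `j`. -/
def IsCoInc {k n s : ℕ} (j : ℕ) (M : CMMod k n s) (M' : CMMod k (n + 1) s) : Prop :=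
  M'.X = incData j M.X (tser • 1) ∧ M'.Y = incData j M.Y 1

/-- 1-increases and 1-co-increases of rigid indecomposable modules are rigid. -/
theorem inc_rigid (k n : ℕ) (hk : 1 ≤ k) (hkn : k < n) (s : ℕ) (M : CMMod k n s)
    (hrig : Rigid M) (hind : Indecomposable M)
    (j : ℕ) (hj : 1 ≤ j) (hj' : j ≤ n)
    (M' : CMMod (k + 1) (n + 1) s) (hM' : IsInc j M M')
    (M'' : CMMod k (n + 1) s) (hM'' : IsCoInc j M M'') :
    Rigid M' ∧ Rigid M'' := by
  obtain ⟨hX1, hY1⟩ := hM'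
  obtain ⟨hX2, hY2⟩ := hM''
  have hn2 : 2 ≤ n := by omega
  constructor
  · exact master hn2 (by omega) hj hj' M hrig (k' := k+1) (ε := 0) (by omega) (by omega) M'
      (by rw [hX1]; congr 1; simp) (by rw [hY1]; congr 1; simp)
  · exact master hn2 (by omega) hj hj' M hrig (k' := k) (ε := 1) (by omega) (by omega) M''
      (by rw [hX2]; congr 1; simp) (by rw [hY2]; congr 1; simp)
end GCC
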